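/- Let L be a first-order language and let G be a group that is also an L-structure, and suppose there exists a left-invariant mean m on ℓ-RUC(G), i.e., a mean with m(h ↦ f(ah)) = m(f) for all a ∈ G and f ∈ ℓ-RUC(G). Then for every nonempty compact Hausdorff topological space X with a basis ℬ, writing ρ for the σ-topology generated by ℬ, and for every action · : G × X → X that is σ-continuous (for every U ∈ ρ, {(g,x) : g·x ∈ U} is a countable union of products of a definable subset of G with a member of ρ), there exists a G-invariant probability measure μ on 𝔄(X), the σ-algebra generated by ρ; G-invariance means μ({x ∈ X : g·x ∈ A}) = μ(A) for every g ∈ G and every A ∈ 𝔄(X). -/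

import Mathlib

open FirstOrder

/-- A function `f : G → ℝ` on a group `G` that is an `L`-structure is
logically right uniformly continuous if for every `ε > 0` there is a countable
cover of `G` by definable sets `Θ n` (with parameters from `G`) such that whenever
`g₁, g₂` lie in the same `Θ n`, then `|f (g₁ * h) - f (g₂ * h)| < ε` for all `h`. -/
def LRUC {G : Type*} [Group G] (L : Language) [L.Structure G] (f : G → ℝ) : Prop :=
  ∀ ε : ℝ, 0 < ε → ∃ Θ : ℕ → Set G,
    (∀ n : ℕ, (Set.univ : Set G).Definable₁ L (Θ n)) ∧
    (⋃ n, Θ n) = Set.univ ∧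
    ∀ n : ℕ, ∀ g₁ ∈ Θ n, ∀ g₂ ∈ Θ n, ∀ h : G, |f (g₁ * h) - f (g₂ * h)| < ε

/-- `ℓ-RUC(G)`: the bounded logically right uniformly continuous functions. -/
def lRUCSet (G : Type*) [Group G] (L : Language) [L.Structure G] : Set (G → ℝ) :=
  {f : G → ℝ | LRUC L f ∧ ∃ M : ℝ, ∀ x : G, |f x| ≤ M}

/-- A mean on `ℓ-RUC(G)`: linear on `ℓ-RUC(G)` and between the inf and the sup. -/
def IsMean {G : Type*} [Group G] (L : Language) [L.Structure G]
    (F : (G → ℝ) → ℝ) : Prop :=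
  (∀ f g : G → ℝ, f ∈ lRUCSet G L → g ∈ lRUCSet G L → F (f + g) = F f + F g) ∧
  (∀ (c : ℝ) (f : G → ℝ), f ∈ lRUCSet G L → F (c • f) = c * F f) ∧
  ∀ f : G → ℝ, f ∈ lRUCSet G L → (⨅ x : G, f x) ≤ F f ∧ F f ≤ ⨆ x : G, f x

/-- The σ-topology generated by a family `B` of subsets of `X`. -/
inductive SigmaGen {X : Type*} (B : Set (Set X)) : Set X → Prop
  | basic : ∀ s ∈ B, SigmaGen B s
  | empty : SigmaGen B ∅
  | univ : SigmaGen B Set.univ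
  | inter : ∀ s t : Set X, SigmaGen B s → SigmaGen B t → SigmaGen B (s ∩ t)
  | iUnion : ∀ f : ℕ → Set X, (∀ n, SigmaGen B (f n)) → SigmaGen B (⋃ n, f n)


set_option linter.unusedSectionVars false
set_option maxHeartbeats 1000000

section SGAux

open Set TopologicalSpace

variable {X : Type*} [TopologicalSpace X] {B : Set (Set X)}

lemma sg_isOpen (hB : IsTopologicalBasis B) {s : Set X} (h : SigmaGen B s) : IsOpen s := by
  induction h with
  | basic s hs => exact hB.isOpen hs
  | empty => exact isOpen_empty
  | univ => exact isOpen_univ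
  | inter s t _ _ hs ht => exact hs.inter ht
  | iUnion f _ hf => exact isOpen_iUnion hf

lemma sg_iUnion_countable {ι : Sort*} [Countable ι] {f : ι → Set X}
    (hf : ∀ i, SigmaGen B (f i)) : SigmaGen B (⋃ i, f i) := by
  rcases isEmpty_or_nonempty ι with h | h
  · simpa [Set.iUnion_of_empty] using SigmaGen.empty (B := B)
  · obtain ⟨g, hg⟩ := exists_surjective_nat ι
    have heq : (⋃ i, f i) = ⋃ n, f (g n) := by
      apply subset_antisymm
      · refine iUnion_subset fun i => ?_
        obtain ⟨n, rfl⟩ := hg i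
        exact subset_iUnion (fun n => f (g n)) n
      · exact iUnion_subset fun n => subset_iUnion f (g n)
    rw [heq]
    exact SigmaGen.iUnion _ fun n => hf (g n)

lemma sg_union {s t : Set X} (hs : SigmaGen B s) (ht : SigmaGen B t) : SigmaGen B (s ∪ t) := by
  rw [Set.union_eq_iUnion]
  exact sg_iUnion_countable (f := fun b : Bool => cond b s t) (by rintro (_ | _) <;> simpa)

lemma sg_biUnion_finset {ι : Type*} {t : Finset ι} {f : ι → Set X}
    (hf : ∀ i ∈ t, SigmaGen B (f i)) : SigmaGen B (⋃ i ∈ t, f i) := by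
  classical
  induction t using Finset.induction_on with
  | empty => simpa using SigmaGen.empty (B := B)
  | insert _ _ hnot ih =>
    rw [Finset.set_biUnion_insert]
    exact sg_union (hf _ (Finset.mem_insert_self _ _))
      (ih fun i hi => hf i (Finset.mem_insert_of_mem hi))

lemma sg_of_open_sigma_compact (hB : IsTopologicalBasis B) {O : Set X}
    (hO : IsOpen O) (K : ℕ → Set X) (hKc : ∀ n, IsCompact (K n)) (hKO : ∀ n, K n ⊆ O)
    (hcov : O ⊆ ⋃ n, K n) : SigmaGen B O := by
  have key : ∀ n, ∃ U : Set X, SigmaGen B U ∧ K n ⊆ U ∧ U ⊆ O := by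
    intro n
    have hbase : ∀ x ∈ K n, ∃ b ∈ B, x ∈ b ∧ b ⊆ O := fun x hx =>
      hB.exists_subset_of_mem_open (hKO n hx) hO
    have hc : K n ⊆ ⋃ i : {b : Set X // b ∈ B ∧ b ⊆ O}, (i : Set X) := by
      intro x hx
      obtain ⟨b, hbB, hxb, hbO⟩ := hbase x hx
      exact mem_iUnion.2 ⟨⟨b, hbB, hbO⟩, hxb⟩
    obtain ⟨t, ht⟩ := (hKc n).elim_finite_subcover (fun i : {b : Set X // b ∈ B ∧ b ⊆ O} =>
      (i : Set X)) (fun i => hB.isOpen i.2.1) hc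
    refine ⟨⋃ i ∈ t, (i : Set X), sg_biUnion_finset fun i _ => SigmaGen.basic _ i.2.1, ht, ?_⟩
    exact iUnion₂_subset fun i _ => i.2.2
  choose U hU hKU hUO using key
  have : O = ⋃ n, U n := by
    apply subset_antisymm
    · exact fun x hx => by
        obtain ⟨_, ⟨n, rfl⟩, hn⟩ := hcov hx
        exact mem_iUnion.2 ⟨n, hKU n hn⟩
    · exact iUnion_subset hUO
  rw [this]
  exact SigmaGen.iUnion _ hU

lemma sg_preimage_Ioo [CompactSpace X] (hB : IsTopologicalBasis B) {φ : X → ℝ}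
    (hφ : Continuous φ) (a b : ℝ) : SigmaGen B (φ ⁻¹' Set.Ioo a b) := by
  rcases le_or_gt b a with hba | hab
  · have : φ ⁻¹' Set.Ioo a b = ∅ := by
      ext x; simp only [mem_preimage, mem_Ioo, mem_empty_iff_false, iff_false, not_and, not_lt]
      intro h; linarith
    rw [this]; exact SigmaGen.empty
  · have hd : (0:ℝ) < b - a := by linarith
    refine sg_of_open_sigma_compact hB (isOpen_Ioo.preimage hφ)
      (fun n => φ ⁻¹' Set.Icc (a + (b-a)/(n+3)) (b - (b-a)/(n+3))) (fun n => ?_) (fun n => ?_) ?_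
    · exact (isClosed_Icc.preimage hφ).isCompact
    · intro x hx
      have hpos : (0:ℝ) < (b-a)/(n+3) := by positivity
      simp only [mem_preimage, mem_Icc] at hx
      exact ⟨by linarith [hx.1], by linarith [hx.2]⟩
    · intro x hx
      simp only [mem_preimage, mem_Ioo] at hx
      set c := min (φ x - a) (b - φ x) with hc
      have hcpos : 0 < c := lt_min (by linarith [hx.1]) (by linarith [hx.2])
      obtain ⟨n, hn⟩ := exists_nat_gt ((b - a) / c)
      have h3 : (b - a) / c < (n:ℝ) + 3 := by linarith
      have hlt : (b - a) / ((n:ℝ)+3) < c := by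
        rw [div_lt_iff₀ (by positivity)]
        rw [div_lt_iff₀ hcpos] at h3
        linarith
      refine mem_iUnion.2 ⟨n, ?_⟩
      simp only [mem_preimage, mem_Icc]
      constructor
      · have : c ≤ φ x - a := min_le_left _ _
        linarith
      · have : c ≤ b - φ x := min_le_right _ _
        linarith

lemma sg_preimage_act {G : Type*} {L : Language} [Group G] [L.Structure G]
    {act : G → X → X}
    (hcont : ∀ U : Set X, SigmaGen B U →
      ∃ (Φ : ℕ → Set G) (V : ℕ → Set X),
        (∀ i : ℕ, (Set.univ : Set G).Definable₁ L (Φ i)) ∧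
        (∀ i : ℕ, SigmaGen B (V i)) ∧
        {p : G × X | act p.1 p.2 ∈ U} = ⋃ i : ℕ, Φ i ×ˢ V i)
    (g : G) {U : Set X} (hU : SigmaGen B U) : SigmaGen B ((fun x => act g x) ⁻¹' U) := by
  obtain ⟨Φ, V, _, hV, heq⟩ := hcont U hU
  have hiff : ∀ (g' : G) (x : X), act g' x ∈ U ↔ ∃ i, g' ∈ Φ i ∧ x ∈ V i := by
    intro g' x
    constructor
    · intro hx
      have hx' : (g', x) ∈ {p : G × X | act p.1 p.2 ∈ U} := hx
      rw [heq] at hx'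
      obtain ⟨_, ⟨i, rfl⟩, hgi, hxi⟩ := hx'
      exact ⟨i, hgi, hxi⟩
    · rintro ⟨i, hgi, hxi⟩
      have hx' : (g', x) ∈ ⋃ i : ℕ, Φ i ×ˢ V i := Set.mem_iUnion.2 ⟨i, hgi, hxi⟩
      rw [← heq] at hx'
      exact hx'
  have hset : (fun x => act g x) ⁻¹' U = ⋃ i, ⋃ (_ : g ∈ Φ i), V i := by
    ext x
    simp only [mem_preimage, mem_iUnion, hiff g x, exists_prop]
  rw [hset]
  refine SigmaGen.iUnion _ fun i => ?_
  rcases em (g ∈ Φ i) with hg | hg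
  · have : (⋃ (_ : g ∈ Φ i), V i) = V i := by ext x; simp [hg]
    rw [this]; exact hV i
  · have : (⋃ (_ : g ∈ Φ i), V i) = ∅ := by ext x; simp [hg]
    rw [this]; exact SigmaGen.empty

end SGAux

section SCont

open Set TopologicalSpace

variable {X : Type*} [TopologicalSpace X]

/-- σ-continuous bounded functions. -/
def SCont (B : Set (Set X)) (ψ : X → ℝ) : Prop :=
  (∃ M : ℝ, ∀ x, |ψ x| ≤ M) ∧ ∀ a b : ℝ, SigmaGen B (ψ ⁻¹' Set.Ioo a b)

variable {B : Set (Set X)}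

lemma SCont.preimage_Iio {ψ : X → ℝ} (hψ : SCont B ψ) (b : ℝ) :
    SigmaGen B (ψ ⁻¹' Set.Iio b) := by
  obtain ⟨⟨M, hM⟩, h⟩ := hψ
  have : ψ ⁻¹' Set.Iio b = ψ ⁻¹' Set.Ioo (-(|M|+1)) b := by
    ext x
    simp only [mem_preimage, mem_Iio, mem_Ioo, iff_and_self]
    intro _
    have := hM x
    have h1 : -|ψ x| ≤ ψ x := neg_abs_le _
    have h2 : |M| ≥ M := le_abs_self M
    nlinarith [abs_nonneg (ψ x)]
  rw [this]; exact h _ _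

lemma SCont.preimage_Ioi {ψ : X → ℝ} (hψ : SCont B ψ) (a : ℝ) :
    SigmaGen B (ψ ⁻¹' Set.Ioi a) := by
  obtain ⟨⟨M, hM⟩, h⟩ := hψ
  have : ψ ⁻¹' Set.Ioi a = ψ ⁻¹' Set.Ioo a (|M|+1) := by
    ext x
    simp only [mem_preimage, mem_Ioi, mem_Ioo, iff_self_and]
    intro _
    have := hM x
    have h1 : ψ x ≤ |ψ x| := le_abs_self _
    have h2 : |M| ≥ M := le_abs_self M
    nlinarith [abs_nonneg (ψ x)]
  rw [this]; exact h _ _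

lemma SCont.const (c : ℝ) : SCont B (fun _ => c) := by
  refine ⟨⟨|c|, fun _ => le_refl _⟩, fun a b => ?_⟩
  rcases em (c ∈ Set.Ioo a b) with h | h
  · have : (fun _ : X => c) ⁻¹' Set.Ioo a b = Set.univ := by
      ext x; simp [h.1, h.2]
    rw [this]; exact SigmaGen.univ
  · have : (fun _ : X => c) ⁻¹' Set.Ioo a b = ∅ := by
      ext x
      simp only [mem_preimage, mem_empty_iff_false, iff_false]
      exact h
    rw [this]; exact SigmaGen.empty

lemma SCont.add {ψ χ : X → ℝ} (hψ : SCont B ψ) (hχ : SCont B χ) :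
    SCont B (fun x => ψ x + χ x) := by
  obtain ⟨⟨M, hM⟩, hψ2⟩ := hψ
  obtain ⟨⟨M', hM'⟩, hχ2⟩ := hχ
  refine ⟨⟨M + M', fun x => (abs_add_le _ _).trans (add_le_add (hM x) (hM' x))⟩, fun a b => ?_⟩
  classical
  have key : (fun x => ψ x + χ x) ⁻¹' Set.Ioo a b =
      ⋃ p : {p : (ℚ × ℚ) × ℚ × ℚ //
          a ≤ (p.1.1 : ℝ) + (p.2.1 : ℝ) ∧ (p.1.2 : ℝ) + (p.2.2 : ℝ) ≤ b},
        (ψ ⁻¹' Set.Ioo (p.1.1.1 : ℝ) (p.1.1.2 : ℝ)) ∩ (χ ⁻¹' Set.Ioo (p.1.2.1 : ℝ) (p.1.2.2 : ℝ)) := by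
    ext x
    simp only [mem_preimage, mem_Ioo, mem_iUnion, mem_inter_iff]
    constructor
    · rintro ⟨h1, h2⟩
      set s := ψ x; set t := χ x
      set δ := min (s + t - a) (b - s - t) with hδ
      have hδpos : 0 < δ := lt_min (by linarith) (by linarith)
      obtain ⟨p1, hp1, hp1'⟩ := exists_rat_btwn (show s - δ/2 < s by linarith)
      obtain ⟨q1, hq1, hq1'⟩ := exists_rat_btwn (show s < s + δ/2 by linarith)
      obtain ⟨p2, hp2, hp2'⟩ := exists_rat_btwn (show t - δ/2 < t by linarith)
      obtain ⟨q2, hq2, hq2'⟩ := exists_rat_btwn (show t < t + δ/2 by linarith)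
      have hda : δ ≤ s + t - a := min_le_left _ _
      have hdb : δ ≤ b - s - t := min_le_right _ _
      refine ⟨⟨((p1, q1), (p2, q2)), ?_, ?_⟩, ⟨hp1', hq1⟩, ⟨hp2', hq2⟩⟩
      · simp only; linarith
      · simp only; linarith
    · rintro ⟨⟨⟨⟨p1, q1⟩, ⟨p2, q2⟩⟩, hpa, hqb⟩, ⟨hs1, hs2⟩, ⟨ht1, ht2⟩⟩
      simp only at hpa hqb hs1 hs2 ht1 ht2
      constructor <;> linarith
  rw [key]
  exact sg_iUnion_countable fun p => SigmaGen.inter _ _ (hψ2 _ _) (hχ2 _ _)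

lemma SCont.neg {ψ : X → ℝ} (hψ : SCont B ψ) : SCont B (fun x => -ψ x) := by
  obtain ⟨⟨M, hM⟩, hψ2⟩ := hψ
  refine ⟨⟨M, fun x => by rw [abs_neg]; exact hM x⟩, fun a b => ?_⟩
  have : (fun x => -ψ x) ⁻¹' Set.Ioo a b = ψ ⁻¹' Set.Ioo (-b) (-a) := by
    ext x
    simp only [mem_preimage, mem_Ioo]
    constructor <;> (rintro ⟨h1, h2⟩; constructor <;> linarith)
  rw [this]; exact hψ2 _ _

lemma SCont.sub {ψ χ : X → ℝ} (hψ : SCont B ψ) (hχ : SCont B χ) :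
    SCont B (fun x => ψ x - χ x) := by
  have := hψ.add hχ.neg
  simpa [sub_eq_add_neg] using this

lemma SCont.smul {c : ℝ} (hc : 0 < c) {ψ : X → ℝ} (hψ : SCont B ψ) :
    SCont B (fun x => c * ψ x) := by
  obtain ⟨⟨M, hM⟩, hψ2⟩ := hψ
  refine ⟨⟨c * M, fun x => by rw [abs_mul, abs_of_pos hc]; exact mul_le_mul_of_nonneg_left (hM x) hc.le⟩,
    fun a b => ?_⟩
  have : (fun x => c * ψ x) ⁻¹' Set.Ioo a b = ψ ⁻¹' Set.Ioo (a / c) (b / c) := by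
    ext x
    simp only [mem_preimage, mem_Ioo]
    rw [div_lt_iff₀ hc, lt_div_iff₀ hc]
    constructor <;> (rintro ⟨h1, h2⟩; constructor <;> linarith [mul_comm c (ψ x)])
  rw [this]; exact hψ2 _ _

lemma SCont.fmin {ψ χ : X → ℝ} (hψ : SCont B ψ) (hχ : SCont B χ) :
    SCont B (fun x => min (ψ x) (χ x)) := by
  refine ⟨?_, fun a b => ?_⟩
  · obtain ⟨⟨M, hM⟩, _⟩ := hψ
    obtain ⟨⟨M', hM'⟩, _⟩ := hχ
    refine ⟨|M| + |M'|, fun x => ?_⟩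
    rw [abs_le]
    have h1 := abs_le.1 (hM x); have h2 := abs_le.1 (hM' x)
    have := le_abs_self M; have := le_abs_self M'
    have := neg_abs_le M; have := neg_abs_le M'
    constructor
    · apply le_min <;> nlinarith [abs_nonneg M, abs_nonneg M']
    · refine (min_le_left (ψ x) (χ x)).trans ?_
      nlinarith [abs_nonneg M']
  · have : (fun x => min (ψ x) (χ x)) ⁻¹' Set.Ioo a b =
        ((ψ ⁻¹' Set.Ioi a) ∩ (χ ⁻¹' Set.Ioi a)) ∩ ((ψ ⁻¹' Set.Iio b) ∪ (χ ⁻¹' Set.Iio b)) := by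
      ext x
      simp only [mem_preimage, mem_Ioo, mem_inter_iff, mem_union, mem_Ioi, mem_Iio, lt_min_iff,
        min_lt_iff]
    rw [this]
    exact SigmaGen.inter _ _ (SigmaGen.inter _ _ (hψ.preimage_Ioi a) (hχ.preimage_Ioi a))
      (sg_union (hψ.preimage_Iio b) (hχ.preimage_Iio b))

lemma SCont.of_continuous [CompactSpace X] (hB : IsTopologicalBasis B) {φ : X → ℝ}
    (hφ : Continuous φ) : SCont B φ := by
  constructor
  · obtain ⟨M, hM⟩ := isBounded_iff_forall_norm_le.1 (isCompact_range hφ).isBounded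
    exact ⟨M, fun x => by simpa [Real.norm_eq_abs] using hM _ ⟨x, rfl⟩⟩
  · exact fun a b => sg_preimage_Ioo hB hφ a b

end SCont

section DefHelp

open Set

variable {G : Type*} {L : Language} [L.Structure G]

lemma definable₁_univ : (Set.univ : Set G).Definable₁ L (Set.univ : Set G) := by
  have : {x : Fin 1 → G | x 0 ∈ (Set.univ : Set G)} = Set.univ := by ext x; simp
  unfold Set.Definable₁
  rw [this]
  exact Set.definable_univ

lemma definable₁_inter {s t : Set G} (hs : (Set.univ : Set G).Definable₁ L s)
    (ht : (Set.univ : Set G).Definable₁ L t) : (Set.univ : Set G).Definable₁ L (s ∩ t) := by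
  have h := Set.Definable.inter hs ht
  have heq : {x : Fin 1 → G | x 0 ∈ s ∩ t} =
      {x : Fin 1 → G | x 0 ∈ s} ∩ {x : Fin 1 → G | x 0 ∈ t} := by
    ext x; simp [Set.mem_inter_iff]
  unfold Set.Definable₁
  rw [heq]
  exact h

lemma definable₁_biInter {ι : Type*} {t : Finset ι} {Φ : ι → Set G}
    (hΦ : ∀ j ∈ t, (Set.univ : Set G).Definable₁ L (Φ j)) :
    (Set.univ : Set G).Definable₁ L (⋂ j ∈ t, Φ j) := by
  classical
  induction t using Finset.induction_on with
  | empty => simpa using definable₁_univ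
  | insert _ _ hnot ih =>
    rw [Finset.set_biInter_insert]
    exact definable₁_inter (hΦ _ (Finset.mem_insert_self _ _))
      (ih fun j hj => hΦ j (Finset.mem_insert_of_mem hj))

end DefHelp

section Main

open Set TopologicalSpace

variable {G : Type*} [Group G] {L : Language} [L.Structure G]
  {X : Type*} [TopologicalSpace X] [CompactSpace X] [T2Space X] [Nonempty X]
  {B : Set (Set X)} {act : G → X → X}

/-- The pullback of `ψ` along the orbit map of a fixed point. -/
noncomputable def fG (act : G → X → X) (ψ : X → ℝ) : G → ℝ :=
  fun g => ψ (act g (Classical.arbitrary X))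

theorem fG_mem_lRUC (hB : IsTopologicalBasis B)
    (hmul : ∀ (g h : G) (x : X), act (g * h) x = act g (act h x))
    (hcont : ∀ U : Set X, SigmaGen B U →
      ∃ (Φ : ℕ → Set G) (V : ℕ → Set X),
        (∀ i : ℕ, (Set.univ : Set G).Definable₁ L (Φ i)) ∧
        (∀ i : ℕ, SigmaGen B (V i)) ∧
        {p : G × X | act p.1 p.2 ∈ U} = ⋃ i : ℕ, Φ i ×ˢ V i)
    {ψ : X → ℝ} (hψ : SCont B ψ) : fG act ψ ∈ lRUCSet G L := by
  classical
  refine ⟨?_, ?_⟩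
  · -- LRUC
    intro ε hε
    set δ := ε / 2 with hδdef
    have hδ : 0 < δ := by positivity
    -- for each rational q, the preimage of the interval (q, q+δ)
    have hU : ∀ q : ℚ, SigmaGen B (ψ ⁻¹' Set.Ioo (q : ℝ) ((q : ℝ) + δ)) := fun q => hψ.2 _ _
    choose Φ V hΦ hV heq using fun q : ℚ => hcont _ (hU q)
    -- membership criterion
    have hiff : ∀ (q : ℚ) (g : G) (x : X),
        ψ (act g x) ∈ Set.Ioo (q : ℝ) ((q : ℝ) + δ) ↔ ∃ i, g ∈ Φ q i ∧ x ∈ V q i := by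
      intro q g x
      constructor
      · intro hx
        have hx' : (g, x) ∈ {p : G × X | act p.1 p.2 ∈ ψ ⁻¹' Set.Ioo (q:ℝ) ((q:ℝ)+δ)} := hx
        rw [heq q] at hx'
        obtain ⟨_, ⟨i, rfl⟩, hgi, hxi⟩ := hx'
        exact ⟨i, hgi, hxi⟩
      · rintro ⟨i, hgi, hxi⟩
        have hx' : (g, x) ∈ ⋃ i : ℕ, Φ q i ×ˢ V q i := Set.mem_iUnion.2 ⟨i, hgi, hxi⟩
        rw [← heq q] at hx'
        exact hx'
    -- for every g there is a finite "good" covering family all of whose Φ's contain g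
    have claim : ∀ g : G, ∃ s : Finset (ℚ × ℕ),
        ((Set.univ : Set X) ⊆ ⋃ j ∈ s, V j.1 j.2) ∧ ∀ j ∈ s, g ∈ Φ j.1 j.2 := by
      intro g
      have hcov : (Set.univ : Set X) ⊆
          ⋃ i : {j : ℚ × ℕ // g ∈ Φ j.1 j.2}, V i.1.1 i.1.2 := by
        intro x _
        obtain ⟨q, hq1, hq2⟩ := exists_rat_btwn (show ψ (act g x) - δ < ψ (act g x) by linarith)
        have hmem : ψ (act g x) ∈ Set.Ioo (q : ℝ) ((q : ℝ) + δ) := ⟨hq2, by linarith⟩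
        obtain ⟨i, hgi, hxi⟩ := (hiff q g x).1 hmem
        exact Set.mem_iUnion.2 ⟨⟨(q, i), hgi⟩, hxi⟩
      obtain ⟨t, ht⟩ := isCompact_univ.elim_finite_subcover
        (fun i : {j : ℚ × ℕ // g ∈ Φ j.1 j.2} => V i.1.1 i.1.2)
        (fun i => sg_isOpen hB (hV i.1.1 i.1.2)) hcov
      refine ⟨t.image Subtype.val, ?_, ?_⟩
      · intro x hx
        obtain ⟨_, ⟨i, rfl⟩, _, ⟨hit, rfl⟩, hxi⟩ := ht hx
        exact Set.mem_biUnion (Finset.mem_image_of_mem _ hit) hxi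
      · intro j hj
        obtain ⟨i, _, rfl⟩ := Finset.mem_image.1 hj
        exact i.2
    -- the type of good families
    have hTne : Nonempty {s : Finset (ℚ × ℕ) // (Set.univ : Set X) ⊆ ⋃ j ∈ s, V j.1 j.2} := by
      obtain ⟨s, hs, _⟩ := claim 1
      exact ⟨⟨s, hs⟩⟩
    obtain ⟨e, he⟩ := exists_surjective_nat
      {s : Finset (ℚ × ℕ) // (Set.univ : Set X) ⊆ ⋃ j ∈ s, V j.1 j.2}
    refine ⟨fun n => ⋂ j ∈ (e n).1, Φ j.1 j.2, fun n => ?_, ?_, ?_⟩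
    · exact definable₁_biInter fun j _ => hΦ j.1 j.2
    · -- covering G
      rw [Set.eq_univ_iff_forall]
      intro g
      obtain ⟨s, hs, hgs⟩ := claim g
      obtain ⟨n, hn⟩ := he ⟨s, hs⟩
      refine Set.mem_iUnion.2 ⟨n, ?_⟩
      rw [hn]
      exact Set.mem_biInter fun j hj => hgs j hj
    · -- the estimate
      intro n g₁ hg₁ g₂ hg₂ h
      set y := act h (Classical.arbitrary X) with hy
      have hyV : y ∈ ⋃ j ∈ (e n).1, V j.1 j.2 := (e n).2 (Set.mem_univ y)
      obtain ⟨j, hj, hyj⟩ := Set.mem_iUnion₂.1 hyV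
      have hg₁j : g₁ ∈ Φ j.1 j.2 := Set.mem_iInter₂.1 hg₁ j hj
      have hg₂j : g₂ ∈ Φ j.1 j.2 := Set.mem_iInter₂.1 hg₂ j hj
      have h1 : ψ (act g₁ y) ∈ Set.Ioo (j.1 : ℝ) ((j.1 : ℝ) + δ) :=
        (hiff j.1 g₁ y).2 ⟨j.2, hg₁j, hyj⟩
      have h2 : ψ (act g₂ y) ∈ Set.Ioo (j.1 : ℝ) ((j.1 : ℝ) + δ) :=
        (hiff j.1 g₂ y).2 ⟨j.2, hg₂j, hyj⟩
      have e1 : fG act ψ (g₁ * h) = ψ (act g₁ y) := by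
        simp only [fG, hmul g₁ h (Classical.arbitrary X), hy]
      have e2 : fG act ψ (g₂ * h) = ψ (act g₂ y) := by
        simp only [fG, hmul g₂ h (Classical.arbitrary X), hy]
      rw [e1, e2]
      rw [abs_sub_lt_iff]
      obtain ⟨ha1, hb1⟩ := h1
      obtain ⟨ha2, hb2⟩ := h2
      constructor <;> (simp only [hδdef] at *; linarith)
  · obtain ⟨M, hM⟩ := hψ.1
    exact ⟨M, fun g => hM _⟩

end Main

section MeanFacts

open Set TopologicalSpace

variable {G : Type*} [Group G] {L : Language} [L.Structure G]
  {X : Type*} [TopologicalSpace X] [CompactSpace X] [T2Space X] [Nonempty X]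
  {B : Set (Set X)} {act : G → X → X} {m : (G → ℝ) → ℝ}

variable (hB : TopologicalSpace.IsTopologicalBasis B) (hm : IsMean L m)
  (hmul : ∀ (g h : G) (x : X), act (g * h) x = act g (act h x))
  (hcont : ∀ U : Set X, SigmaGen B U →
      ∃ (Φ : ℕ → Set G) (V : ℕ → Set X),
        (∀ i : ℕ, (Set.univ : Set G).Definable₁ L (Φ i)) ∧
        (∀ i : ℕ, SigmaGen B (V i)) ∧
        {p : G × X | act p.1 p.2 ∈ U} = ⋃ i : ℕ, Φ i ×ˢ V i)

/-- admissible functions for a set `V`. -/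
def Adm (B : Set (Set X)) (V : Set X) (ψ : X → ℝ) : Prop :=
  SCont B ψ ∧ (∀ x, 0 ≤ ψ x) ∧ (∀ x, ψ x ≤ 1) ∧ ∀ x, x ∉ V → ψ x = 0

/-- inner content associated to the mean. -/
noncomputable def nu (m : (G → ℝ) → ℝ) (act : G → X → X) (B : Set (Set X)) (V : Set X) : ℝ :=
  sSup {r | ∃ ψ, Adm B V ψ ∧ m (fG act ψ) = r}

lemma adm_zero (V : Set X) : Adm B V (fun _ => 0) :=
  ⟨SCont.const 0, fun _ => le_refl _, fun _ => zero_le_one, fun _ _ => rfl⟩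

lemma nu_S_nonempty (V : Set X) :
    {r | ∃ ψ, Adm B V ψ ∧ m (fG act ψ) = r}.Nonempty :=
  ⟨_, ⟨_, adm_zero V, rfl⟩⟩

include hcont in
lemma SCont.comp_act {ψ : X → ℝ} (hψ : SCont B ψ) (g : G) :
    SCont B (fun x => ψ (act g x)) := by
  obtain ⟨⟨M, hM⟩, h2⟩ := hψ
  exact ⟨⟨M, fun x => hM _⟩, fun a b => sg_preimage_act hcont g (h2 a b)⟩

include hB hm hmul hcont

lemma m_const (c : ℝ) : m (fG act (fun _ => c)) = c := by
  have hmem : fG act (fun _ : X => c) ∈ lRUCSet G L :=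
    fG_mem_lRUC hB hmul hcont (SCont.const c)
  obtain ⟨h1, h2⟩ := hm.2.2 _ hmem
  have hconst : fG act (fun _ : X => c) = fun _ : G => c := rfl
  rw [hconst] at h1 h2
  rw [ciInf_const] at h1
  rw [ciSup_const] at h2
  exact le_antisymm h2 h1

lemma m_add {ψ χ : X → ℝ} (hψ : SCont B ψ) (hχ : SCont B χ) :
    m (fG act (fun x => ψ x + χ x)) = m (fG act ψ) + m (fG act χ) := by
  have h := hm.1 (fG act ψ) (fG act χ) (fG_mem_lRUC hB hmul hcont hψ)
    (fG_mem_lRUC hB hmul hcont hχ)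
  have : fG act (fun x => ψ x + χ x) = fG act ψ + fG act χ := rfl
  rw [this]
  exact h

lemma m_smul (c : ℝ) {ψ : X → ℝ} (hψ : SCont B ψ) :
    m (fG act (fun x => c * ψ x)) = c * m (fG act ψ) := by
  have h := hm.2.1 c (fG act ψ) (fG_mem_lRUC hB hmul hcont hψ)
  have : fG act (fun x => c * ψ x) = c • fG act ψ := rfl
  rw [this]
  exact h

lemma m_nonneg {ψ : X → ℝ} (hψ : SCont B ψ) (h0 : ∀ x, 0 ≤ ψ x) :
    0 ≤ m (fG act ψ) := by
  have h := (hm.2.2 _ (fG_mem_lRUC hB hmul hcont hψ)).1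
  refine le_trans ?_ h
  exact le_ciInf fun g => h0 _

lemma m_mono {ψ χ : X → ℝ} (hψ : SCont B ψ) (hχ : SCont B χ) (hle : ∀ x, ψ x ≤ χ x) :
    m (fG act ψ) ≤ m (fG act χ) := by
  have hsub : SCont B (fun x => χ x - ψ x) := hχ.sub hψ
  have hsplit := m_add (m := m) hB hm hmul hcont hψ hsub
  have heq : (fun x => ψ x + (χ x - ψ x)) = χ := by funext x; ring
  rw [heq] at hsplit
  have hpos := m_nonneg (m := m) hB hm hmul hcont hsub fun x => sub_nonneg.2 (hle x)
  linarith

lemma m_comp_act (hinv : ∀ a : G, ∀ f ∈ lRUCSet G L, m (fun h => f (a * h)) = m f)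
    (g : G) {ψ : X → ℝ} (hψ : SCont B ψ) :
    m (fG act (fun x => ψ (act g x))) = m (fG act ψ) := by
  have heq : fG act (fun x => ψ (act g x)) = fun h => fG act ψ (g * h) := by
    funext h
    simp only [fG]
    rw [hmul g h (Classical.arbitrary X)]
  rw [heq]
  exact hinv g (fG act ψ) (fG_mem_lRUC hB hmul hcont hψ)

lemma nu_S_bdd (V : Set X) : BddAbove {r | ∃ ψ, Adm B V ψ ∧ m (fG act ψ) = r} := by
  refine ⟨1, fun r hr => ?_⟩
  obtain ⟨ψ, hA, rfl⟩ := hr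
  have := m_mono (m := m) hB hm hmul hcont hA.1 (SCont.const 1) hA.2.2.1
  rw [m_const hB hm hmul hcont] at this
  exact this

lemma le_nu_of_adm {V : Set X} {ψ : X → ℝ} (hA : Adm B V ψ) :
    m (fG act ψ) ≤ nu m act B V :=
  le_csSup (nu_S_bdd hB hm hmul hcont V) ⟨ψ, hA, rfl⟩

lemma nu_nonneg (V : Set X) : 0 ≤ nu m act B V := by
  have h0 := le_nu_of_adm (m := m) hB hm hmul hcont (adm_zero V)
  have : m (fG act (fun _ : X => (0:ℝ))) = 0 := m_const hB hm hmul hcont 0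
  linarith

lemma nu_le_one (V : Set X) : nu m act B V ≤ 1 := by
  refine csSup_le (nu_S_nonempty (m := m) V) fun r hr => ?_
  obtain ⟨ψ, hA, rfl⟩ := hr
  have := m_mono (m := m) hB hm hmul hcont hA.1 (SCont.const 1) hA.2.2.1
  rw [m_const hB hm hmul hcont] at this
  exact this

lemma nu_mono {V W : Set X} (h : V ⊆ W) : nu m act B V ≤ nu m act B W := by
  refine csSup_le_csSup (nu_S_bdd hB hm hmul hcont W) (nu_S_nonempty (m := m) V) ?_
  rintro r ⟨ψ, ⟨h1, h2, h3, h4⟩, rfl⟩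
  exact ⟨ψ, ⟨h1, h2, h3, fun x hx => h4 x (fun hxV => hx (h hxV))⟩, rfl⟩

lemma nu_empty : nu m act B (∅ : Set X) = 0 := by
  refine le_antisymm ?_ (nu_nonneg hB hm hmul hcont _)
  refine csSup_le (nu_S_nonempty (m := m) ∅) fun r hr => ?_
  obtain ⟨ψ, hA, rfl⟩ := hr
  have : ψ = fun _ => 0 := funext fun x => hA.2.2.2 x (Set.notMem_empty x)
  rw [this, m_const hB hm hmul hcont]

lemma nu_univ : nu m act B (Set.univ : Set X) = 1 := by
  refine le_antisymm (nu_le_one hB hm hmul hcont _) ?_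
  have hA : Adm B (Set.univ : Set X) (fun _ => 1) :=
    ⟨SCont.const 1, fun _ => zero_le_one, fun _ => le_refl _,
      fun x hx => absurd (Set.mem_univ x) hx⟩
  have := le_nu_of_adm (m := m) hB hm hmul hcont hA
  rwa [m_const hB hm hmul hcont] at this

lemma nu_preimage_le (hinv : ∀ a : G, ∀ f ∈ lRUCSet G L, m (fun h => f (a * h)) = m f)
    (g : G) (V : Set X) :
    nu m act B V ≤ nu m act B ((fun x => act g x) ⁻¹' V) := by
  refine csSup_le_csSup (nu_S_bdd hB hm hmul hcont _) (nu_S_nonempty (m := m) V) ?_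
  rintro r ⟨ψ, ⟨h1, h2, h3, h4⟩, rfl⟩
  refine ⟨fun x => ψ (act g x), ⟨SCont.comp_act hcont h1 g, fun x => h2 _, fun x => h3 _,
    fun x hx => h4 _ hx⟩, ?_⟩
  exact m_comp_act hB hm hmul hcont hinv g h1

lemma nu_preimage (hinv : ∀ a : G, ∀ f ∈ lRUCSet G L, m (fun h => f (a * h)) = m f)
    (hone : ∀ x : X, act 1 x = x) (g : G) (V : Set X) :
    nu m act B ((fun x => act g x) ⁻¹' V) = nu m act B V := by
  refine le_antisymm ?_ (nu_preimage_le hB hm hmul hcont hinv g V)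
  have h := nu_preimage_le hB hm hmul hcont hinv g⁻¹ ((fun x => act g x) ⁻¹' V)
  have heq : (fun x => act g⁻¹ x) ⁻¹' ((fun x => act g x) ⁻¹' V) = V := by
    ext x
    simp only [Set.mem_preimage]
    rw [← hmul, mul_inv_cancel, hone]
  rwa [heq] at h

end MeanFacts

lemma min_sub_min_le {a b c : ℝ} (hbc : b ≤ c) : min a c - min a b ≤ c - b := by
  rcases le_total a b with h | h
  · rw [min_eq_left h, min_eq_left (h.trans hbc)]; linarith
  · rw [min_eq_right h]
    have := min_le_right a c
    linarith

section Subadd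

open Set TopologicalSpace

variable {G : Type*} [Group G] {L : Language} [L.Structure G]
  {X : Type*} [TopologicalSpace X] [CompactSpace X] [T2Space X] [Nonempty X]
  {B : Set (Set X)} {act : G → X → X} {m : (G → ℝ) → ℝ}

lemma SCont.fsum {χ : ℕ → X → ℝ} (hχ : ∀ k, SCont B (χ k)) (n : ℕ) :
    SCont B (fun x => ∑ k ∈ Finset.range n, χ k x) := by
  induction n with
  | zero => simpa using SCont.const 0
  | succ n ih =>
    have heq : (fun x => ∑ k ∈ Finset.range (n+1), χ k x)
        = fun x => (∑ k ∈ Finset.range n, χ k x) + χ n x := by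
      funext x; rw [Finset.sum_range_succ]
    rw [heq]; exact ih.add (hχ n)

variable (hB : TopologicalSpace.IsTopologicalBasis B) (hm : IsMean L m)
  (hmul : ∀ (g h : G) (x : X), act (g * h) x = act g (act h x))
  (hcont : ∀ U : Set X, SigmaGen B U →
      ∃ (Φ : ℕ → Set G) (V : ℕ → Set X),
        (∀ i : ℕ, (Set.univ : Set G).Definable₁ L (Φ i)) ∧
        (∀ i : ℕ, SigmaGen B (V i)) ∧
        {p : G × X | act p.1 p.2 ∈ U} = ⋃ i : ℕ, Φ i ×ˢ V i)

include hB hm hmul hcont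

lemma m_fG_sum {χ : ℕ → X → ℝ} (hχ : ∀ k, SCont B (χ k)) (n : ℕ) :
    m (fG act (fun x => ∑ k ∈ Finset.range n, χ k x))
      = ∑ k ∈ Finset.range n, m (fG act (χ k)) := by
  induction n with
  | zero =>
    simp only [Finset.range_zero, Finset.sum_empty]
    exact m_const hB hm hmul hcont 0
  | succ n ih =>
    have heq : (fun x => ∑ k ∈ Finset.range (n+1), χ k x)
        = fun x => (∑ k ∈ Finset.range n, χ k x) + χ n x := by
      funext x; rw [Finset.sum_range_succ]
    rw [heq, m_add hB hm hmul hcont (SCont.fsum (fun k => hχ k) n) (hχ n), ih,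
      Finset.sum_range_succ]

lemma nu_subadd {V : Set X} (Vn : ℕ → Set X) (hVn : ∀ n, SigmaGen B (Vn n))
    (hcov : V ⊆ ⋃ n, Vn n) {δ : ℝ} (hδ : 0 < δ) :
    ∃ t : Finset ℕ, nu m act B V ≤ ∑ n ∈ t, nu m act B (Vn n) + δ := by
  classical
  set η := δ/3 with hη
  have hηpos : 0 < η := by positivity
  have hlt : nu m act B V - η < nu m act B V := by linarith
  obtain ⟨r, ⟨ψ, hA, rfl⟩, hr⟩ := exists_lt_of_lt_csSup (nu_S_nonempty (m := m) V) hlt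
  obtain ⟨hS, h0, h1, hsupp⟩ := hA
  set K := ψ ⁻¹' Set.Ici η with hKdef
  have hKclosed : IsClosed K := by
    have hKeq : K = (ψ ⁻¹' Set.Iio η)ᶜ := by
      ext x; simp [hKdef, not_lt]
    rw [hKeq]
    exact (sg_isOpen hB (hS.preimage_Iio η)).isClosed_compl
  have hKcomp : IsCompact K := hKclosed.isCompact
  have hKV : K ⊆ ⋃ n, Vn n := by
    intro x hx
    refine hcov ?_
    by_contra hxV
    have h00 := hsupp x hxV
    have : η ≤ ψ x := hx
    rw [h00] at this
    linarith
  obtain ⟨t, ht⟩ := hKcomp.elim_finite_subcover Vn (fun n => sg_isOpen hB (hVn n)) hKV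
  refine ⟨t, ?_⟩
  set N := t.card with hN
  set e : Fin N ≃ {x // x ∈ t} := t.equivFin.symm with he
  have hUcov : K ⊆ ⋃ k : Fin N, Vn (e k) := by
    intro x hx
    obtain ⟨n, hnt, hxn⟩ := mem_iUnion₂.1 (ht hx)
    refine mem_iUnion.2 ⟨e.symm ⟨n, hnt⟩, ?_⟩
    simpa using hxn
  obtain ⟨f, hf⟩ := PartitionOfUnity.exists_isSubordinate hKclosed
    (fun k : Fin N => Vn (e k)) (fun k => sg_isOpen hB (hVn _)) hUcov
  set h' : ℕ → X → ℝ := fun k => if hk : k < N then (f ⟨k, hk⟩ : X → ℝ) else (fun _ => 0)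
    with hh'
  have hcth : ∀ k, Continuous (h' k) := by
    intro k
    simp only [hh']
    split
    · exact (f _).continuous
    · exact continuous_const
  have h'0 : ∀ k x, 0 ≤ h' k x := by
    intro k x
    simp only [hh']
    split
    · exact f.nonneg _ _
    · exact le_refl _
  set Gk : ℕ → X → ℝ := fun k x => ∑ j ∈ Finset.range k, h' j x with hGk
  have hGcont : ∀ k, Continuous (Gk k) := fun k =>
    continuous_finset_sum _ fun j _ => hcth j
  have hGS : ∀ k, SCont B (Gk k) := fun k => SCont.of_continuous hB (hGcont k)
  have hGsucc : ∀ k x, Gk (k+1) x = Gk k x + h' k x := by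
    intro k x; simp only [hGk]; rw [Finset.sum_range_succ]
  have hG0 : ∀ x, Gk 0 x = 0 := by intro x; simp [hGk]
  have hGnonneg : ∀ k x, 0 ≤ Gk k x := fun k x =>
    Finset.sum_nonneg fun j _ => h'0 j x
  set ψk : ℕ → X → ℝ := fun k x => min (ψ x) (Gk (k+1) x) - min (ψ x) (Gk k x) with hψk
  have hψkS : ∀ k, SCont B (ψk k) := fun k =>
    (hS.fmin (hGS (k+1))).sub (hS.fmin (hGS k))
  have hψk0 : ∀ k x, 0 ≤ ψk k x := by
    intro k x
    have : Gk k x ≤ Gk (k+1) x := by rw [hGsucc]; linarith [h'0 k x]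
    have := min_le_min (le_refl (ψ x)) this
    simp only [hψk]; linarith
  have hψk1 : ∀ k x, ψk k x ≤ h' k x := by
    intro k x
    have hle : Gk k x ≤ Gk (k+1) x := by rw [hGsucc]; linarith [h'0 k x]
    have := min_sub_min_le (a := ψ x) hle
    simp only [hψk]
    rw [hGsucc] at this ⊢
    linarith
  have h'le1 : ∀ k x, h' k x ≤ 1 := by
    intro k x
    simp only [hh']
    split
    · exact f.le_one _ _
    · exact zero_le_one
  -- admissibility of the pieces
  have hAdm : ∀ k : Fin N, Adm B (Vn (e k)) (ψk (k : ℕ)) := by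
    intro k
    refine ⟨hψkS _, hψk0 _, fun x => (hψk1 _ x).trans (h'le1 _ x), ?_⟩
    intro x hx
    have hzero : h' (k : ℕ) x = 0 := by
      simp only [hh']
      rw [dif_pos k.isLt]
      have hnot : x ∉ tsupport (f ⟨(k : ℕ), k.isLt⟩) := by
        intro hmem
        exact hx (by simpa [Fin.eta] using hf ⟨(k : ℕ), k.isLt⟩ hmem)
      exact image_eq_zero_of_notMem_tsupport hnot
    simp only [hψk]
    rw [hGsucc]
    rw [hzero, add_zero, sub_self]
  -- telescoping
  have htel : (fun x => ∑ k ∈ Finset.range N, ψk k x) = fun x => min (ψ x) (Gk N x) := by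
    funext x
    have := Finset.sum_range_sub (fun k => min (ψ x) (Gk k x)) N
    simp only [hψk]
    rw [this, hG0 x]
    rw [min_eq_right (h0 x), sub_zero]
  -- pointwise domination
  have hdom : ∀ x, ψ x ≤ min (ψ x) (Gk N x) + η := by
    intro x
    by_cases hxK : x ∈ K
    · have hGN1 : Gk N x = 1 := by
        have h1' : (∑ j ∈ Finset.range N, h' j x) = ∑ k : Fin N, (f k : X → ℝ) x := by
          rw [Finset.sum_range fun j => h' j x]
          refine Finset.sum_congr rfl fun k _ => ?_
          simp only [hh']
          rw [dif_pos k.isLt]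
        have h2' : ∑ᶠ k, (f k : X → ℝ) x = 1 := f.sum_eq_one hxK
        rw [finsum_eq_sum_of_fintype] at h2'
        simp only [hGk]
        rw [h1']
        exact h2'
      rw [hGN1, min_eq_left (h1 x)]
      linarith
    · have hψx : ψ x < η := by
        by_contra hge
        exact hxK (le_of_not_gt hge)
      have : 0 ≤ min (ψ x) (Gk N x) := le_min (h0 x) (hGnonneg N x)
      linarith
  -- putting it together
  have hSmin : SCont B (fun x => min (ψ x) (Gk N x)) := hS.fmin (hGS N)
  have step1 : m (fG act ψ) ≤ m (fG act (fun x => min (ψ x) (Gk N x) + η)) :=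
    m_mono hB hm hmul hcont hS (hSmin.add (SCont.const η)) hdom
  have step2 : m (fG act (fun x => min (ψ x) (Gk N x) + η))
      = m (fG act (fun x => min (ψ x) (Gk N x))) + η := by
    rw [m_add hB hm hmul hcont hSmin (SCont.const η), m_const hB hm hmul hcont]
  have step3 : m (fG act (fun x => min (ψ x) (Gk N x)))
      = ∑ k ∈ Finset.range N, m (fG act (ψk k)) := by
    rw [← htel]
    exact m_fG_sum hB hm hmul hcont hψkS N
  have step4 : ∑ k ∈ Finset.range N, m (fG act (ψk k)) ≤ ∑ n ∈ t, nu m act B (Vn n) := by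
    rw [Finset.sum_range fun k => m (fG act (ψk k))]
    have hle : ∑ k : Fin N, m (fG act (ψk (k : ℕ))) ≤ ∑ k : Fin N, nu m act B (Vn (e k)) :=
      Finset.sum_le_sum fun k _ => le_nu_of_adm hB hm hmul hcont (hAdm k)
    refine hle.trans ?_
    rw [Equiv.sum_comp e fun j : {x // x ∈ t} => nu m act B (Vn j)]
    rw [Finset.sum_coe_sort t fun n => nu m act B (Vn n)]
  have : nu m act B V - η < ∑ n ∈ t, nu m act B (Vn n) + η := by
    calc nu m act B V - η < m (fG act ψ) := hr
      _ ≤ ∑ n ∈ t, nu m act B (Vn n) + η := by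
        rw [← step3] at step4
        linarith [step1, step2, step3]
  linarith

lemma nu_split {W V : Set X} (hW : SigmaGen B W) {ε : ℝ} (hε : 0 < ε) :
    ∃ U : Set X, SigmaGen B U ∧ W \ V ⊆ U ∧
      nu m act B (W ∩ V) + nu m act B U ≤ nu m act B W + ε := by
  set δ := ε/3 with hδdef
  have hδ : 0 < δ := by positivity
  have hlt1 : nu m act B (W ∩ V) - δ < nu m act B (W ∩ V) := by linarith
  obtain ⟨r₁, ⟨ψ₁, hA₁, rfl⟩, hr₁⟩ :=
    exists_lt_of_lt_csSup (nu_S_nonempty (m := m) (W ∩ V)) hlt1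
  set U := W ∩ ψ₁ ⁻¹' Set.Iio δ with hUdef
  have hUsg : SigmaGen B U := SigmaGen.inter _ _ hW (hA₁.1.preimage_Iio δ)
  have hWVU : W \ V ⊆ U := by
    intro x hx
    refine ⟨hx.1, ?_⟩
    have : ψ₁ x = 0 := hA₁.2.2.2 x (fun hxWV => hx.2 hxWV.2)
    show ψ₁ x < δ
    rw [this]; exact hδ
  have hlt2 : nu m act B U - δ < nu m act B U := by linarith
  obtain ⟨r₂, ⟨ψ₂, hA₂, rfl⟩, hr₂⟩ := exists_lt_of_lt_csSup (nu_S_nonempty (m := m) U) hlt2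
  set c : ℝ := (1 + δ)⁻¹ with hc
  have hcpos : 0 < c := by rw [hc]; positivity
  have hsumS : SCont B (fun x => ψ₁ x + ψ₂ x) := hA₁.1.add hA₂.1
  have hsum_le : ∀ x, ψ₁ x + ψ₂ x ≤ 1 + δ := by
    intro x
    rcases eq_or_ne (ψ₂ x) 0 with h2 | h2
    · rw [h2, add_zero]
      linarith [hA₁.2.2.1 x]
    · have hxU : x ∈ U := by
        by_contra hxU
        exact h2 (hA₂.2.2.2 x hxU)
      have : ψ₁ x < δ := hxU.2
      linarith [hA₂.2.2.1 x]
  have hAχ : Adm B W (fun x => c * (ψ₁ x + ψ₂ x)) := by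
    refine ⟨hsumS.smul hcpos, ?_, ?_, ?_⟩
    · intro x
      have := hA₁.2.1 x; have := hA₂.2.1 x
      positivity
    · intro x
      have h := hsum_le x
      calc c * (ψ₁ x + ψ₂ x) ≤ c * (1 + δ) :=
            mul_le_mul_of_nonneg_left h hcpos.le
        _ = 1 := by rw [hc]; field_simp
    · intro x hx
      have h1 : ψ₁ x = 0 := hA₁.2.2.2 x (fun h => hx h.1)
      have h2 : ψ₂ x = 0 := hA₂.2.2.2 x (fun h => hx h.1)
      show c * (ψ₁ x + ψ₂ x) = 0
      rw [h1, h2, add_zero, mul_zero]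
  have hval : m (fG act (fun x => c * (ψ₁ x + ψ₂ x)))
      = c * (m (fG act ψ₁) + m (fG act ψ₂)) := by
    rw [m_smul hB hm hmul hcont c hsumS, m_add hB hm hmul hcont hA₁.1 hA₂.1]
  have hleW : m (fG act (fun x => c * (ψ₁ x + ψ₂ x))) ≤ nu m act B W :=
    le_nu_of_adm hB hm hmul hcont hAχ
  refine ⟨U, hUsg, hWVU, ?_⟩
  rw [hval] at hleW
  have hWle1 : nu m act B W ≤ 1 := nu_le_one hB hm hmul hcont W
  have hW0 : 0 ≤ nu m act B W := nu_nonneg hB hm hmul hcont W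
  have hsum_le' : m (fG act ψ₁) + m (fG act ψ₂) ≤ (1 + δ) * nu m act B W := by
    have h1δ : (0:ℝ) < 1 + δ := by linarith
    rw [hc] at hleW
    calc m (fG act ψ₁) + m (fG act ψ₂)
        = (1 + δ) * ((1 + δ)⁻¹ * (m (fG act ψ₁) + m (fG act ψ₂))) := by
          field_simp
      _ ≤ (1 + δ) * nu m act B W := by
          exact mul_le_mul_of_nonneg_left hleW h1δ.le
  have : nu m act B (W ∩ V) + nu m act B U < (1 + δ) * nu m act B W + 2 * δ := by
    linarith
  have hfinal : (1 + δ) * nu m act B W + 2 * δ ≤ nu m act B W + ε := by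
    have : δ * nu m act B W ≤ δ := by nlinarith
    rw [hδdef] at *
    nlinarith
  linarith

end Subadd

section MeasureConstr

open Set TopologicalSpace MeasureTheory
open scoped ENNReal NNReal

variable {G : Type*} [Group G] {L : Language} [L.Structure G]
  {X : Type*} [TopologicalSpace X] [CompactSpace X] [T2Space X] [Nonempty X]
  {B : Set (Set X)} {act : G → X → X} {m : (G → ℝ) → ℝ}

open Classical in
/-- the set function feeding the outer measure construction. -/
noncomputable def mfun (m : (G → ℝ) → ℝ) (act : G → X → X) (B : Set (Set X)) :
    Set X → ℝ≥0∞ := fun V =>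
  if SigmaGen B V then ENNReal.ofReal (nu m act B V) else ⊤

lemma mfun_sg {V : Set X} (hV : SigmaGen B V) :
    mfun m act B V = ENNReal.ofReal (nu m act B V) := by
  simp only [mfun, if_pos hV]

variable (hB : TopologicalSpace.IsTopologicalBasis B) (hm : IsMean L m)
  (hmul : ∀ (g h : G) (x : X), act (g * h) x = act g (act h x))
  (hcont : ∀ U : Set X, SigmaGen B U →
      ∃ (Φ : ℕ → Set G) (V : ℕ → Set X),
        (∀ i : ℕ, (Set.univ : Set G).Definable₁ L (Φ i)) ∧
        (∀ i : ℕ, SigmaGen B (V i)) ∧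
        {p : G × X | act p.1 p.2 ∈ U} = ⋃ i : ℕ, Φ i ×ˢ V i)

include hB hm hmul hcont

lemma mfun_empty : mfun m act B (∅ : Set X) = 0 := by
  rw [mfun_sg SigmaGen.empty, nu_empty hB hm hmul hcont, ENNReal.ofReal_zero]

lemma ofReal_nu_le_tsum {W : Set X} (Vn : ℕ → Set X)
    (hVn : ∀ n, SigmaGen B (Vn n)) (hsub : W ⊆ ⋃ n, Vn n) :
    ENNReal.ofReal (nu m act B W) ≤ ∑' n, ENNReal.ofReal (nu m act B (Vn n)) := by
  refine ENNReal.le_of_forall_pos_le_add fun ε hε _ => ?_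
  obtain ⟨t, ht⟩ := nu_subadd hB hm hmul hcont Vn hVn hsub (δ := (ε : ℝ))
    (by exact_mod_cast hε)
  calc ENNReal.ofReal (nu m act B W)
      ≤ ENNReal.ofReal (∑ n ∈ t, nu m act B (Vn n) + (ε : ℝ)) :=
        ENNReal.ofReal_le_ofReal ht
    _ ≤ ENNReal.ofReal (∑ n ∈ t, nu m act B (Vn n)) + ENNReal.ofReal (ε : ℝ) :=
        ENNReal.ofReal_add_le
    _ = ∑ n ∈ t, ENNReal.ofReal (nu m act B (Vn n)) + (ε : ℝ≥0∞) := by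
        rw [ENNReal.ofReal_sum_of_nonneg fun n _ => nu_nonneg hB hm hmul hcont (Vn n),
          ENNReal.ofReal_coe_nnreal]
    _ ≤ (∑' n, ENNReal.ofReal (nu m act B (Vn n))) + (ε : ℝ≥0∞) :=
        add_le_add (ENNReal.sum_le_tsum t) le_rfl

lemma muOut_sg {V : Set X} (hV : SigmaGen B V) :
    MeasureTheory.OuterMeasure.ofFunction (mfun m act B)
      (mfun_empty hB hm hmul hcont) V = ENNReal.ofReal (nu m act B V) := by
  refine le_antisymm ((MeasureTheory.OuterMeasure.ofFunction_le V).trans_eq (mfun_sg hV)) ?_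
  rw [MeasureTheory.OuterMeasure.ofFunction_apply]
  refine le_iInf fun f => le_iInf fun hf => ?_
  by_cases hall : ∀ n, SigmaGen B (f n)
  · calc ENNReal.ofReal (nu m act B V)
        ≤ ∑' n, ENNReal.ofReal (nu m act B (f n)) :=
          ofReal_nu_le_tsum hB hm hmul hcont f hall hf
      _ = ∑' n, mfun m act B (f n) := tsum_congr fun n => (mfun_sg (hall n)).symm
  · push_neg at hall
    obtain ⟨n0, hn0⟩ := hall
    have htop : mfun m act B (f n0) = ⊤ := by simp only [mfun, if_neg hn0]
    have : (∑' n, mfun m act B (f n)) = ⊤ :=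
      top_unique (htop ▸ ENNReal.le_tsum n0)
    rw [this]
    exact le_top

lemma muOut_le_of_subset {A V : Set X} (hV : SigmaGen B V) (hAV : A ⊆ V) :
    MeasureTheory.OuterMeasure.ofFunction (mfun m act B)
      (mfun_empty hB hm hmul hcont) A ≤ ENNReal.ofReal (nu m act B V) := by
  calc MeasureTheory.OuterMeasure.ofFunction (mfun m act B) (mfun_empty hB hm hmul hcont) A
      ≤ MeasureTheory.OuterMeasure.ofFunction (mfun m act B) (mfun_empty hB hm hmul hcont) V :=
        MeasureTheory.measure_mono hAV
    _ ≤ mfun m act B V := MeasureTheory.OuterMeasure.ofFunction_le V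
    _ = ENNReal.ofReal (nu m act B V) := mfun_sg hV

lemma muOut_caratheodory {V : Set X} (hV : SigmaGen B V) (A : Set X) :
    MeasureTheory.OuterMeasure.ofFunction (mfun m act B) (mfun_empty hB hm hmul hcont) (A ∩ V)
      + MeasureTheory.OuterMeasure.ofFunction (mfun m act B)
          (mfun_empty hB hm hmul hcont) (A \ V)
    ≤ MeasureTheory.OuterMeasure.ofFunction (mfun m act B)
        (mfun_empty hB hm hmul hcont) A := by
  set μ := MeasureTheory.OuterMeasure.ofFunction (mfun m act B) (mfun_empty hB hm hmul hcont)
    with hμ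
  have hfinA : μ A ≠ ⊤ := by
    have h1 : μ A ≤ ENNReal.ofReal (nu m act B Set.univ) :=
      muOut_le_of_subset hB hm hmul hcont SigmaGen.univ (Set.subset_univ A)
    exact (h1.trans_lt ENNReal.ofReal_lt_top).ne
  refine ENNReal.le_of_forall_pos_le_add fun ε hε _ => ?_
  set εh : ℝ≥0 := ε / 2 with hεh
  have hεhpos : 0 < εh := by positivity
  have hlt : μ A < μ A + εh := ENNReal.lt_add_right hfinA (by exact_mod_cast hεhpos.ne')
  rw [hμ, MeasureTheory.OuterMeasure.ofFunction_apply] at hlt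
  obtain ⟨f, hlt2⟩ := iInf_lt_iff.1 hlt
  obtain ⟨hfA, hsum⟩ := iInf_lt_iff.1 hlt2
  have hall : ∀ n, SigmaGen B (f n) := by
    intro n
    by_contra hn
    have htop : mfun m act B (f n) = ⊤ := by simp only [mfun, if_neg hn]
    have : (∑' n, mfun m act B (f n)) = ⊤ := top_unique (htop ▸ ENNReal.le_tsum n)
    rw [this] at hsum
    exact absurd hsum (by simp)
  set W := ⋃ n, f n with hW
  have hWsg : SigmaGen B W := SigmaGen.iUnion _ hall
  obtain ⟨U, hUsg, hWVU, hsplit⟩ := nu_split hB hm hmul hcont (V := V) hWsg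
    (ε := ((εh : ℝ≥0) : ℝ)) (by exact_mod_cast hεhpos)
  have h1 : μ (A ∩ V) ≤ ENNReal.ofReal (nu m act B (W ∩ V)) :=
    muOut_le_of_subset hB hm hmul hcont (SigmaGen.inter _ _ hWsg hV)
      (Set.inter_subset_inter_left V hfA)
  have h2 : μ (A \ V) ≤ ENNReal.ofReal (nu m act B U) :=
    muOut_le_of_subset hB hm hmul hcont hUsg
      (fun x hx => hWVU ⟨hfA hx.1, hx.2⟩)
  have h3 : μ (A ∩ V) + μ (A \ V)
      ≤ ENNReal.ofReal (nu m act B W) + (εh : ℝ≥0∞) := by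
    calc μ (A ∩ V) + μ (A \ V)
        ≤ ENNReal.ofReal (nu m act B (W ∩ V)) + ENNReal.ofReal (nu m act B U) :=
          add_le_add h1 h2
      _ = ENNReal.ofReal (nu m act B (W ∩ V) + nu m act B U) :=
          (ENNReal.ofReal_add (nu_nonneg hB hm hmul hcont _)
            (nu_nonneg hB hm hmul hcont _)).symm
      _ ≤ ENNReal.ofReal (nu m act B W + (εh : ℝ)) := ENNReal.ofReal_le_ofReal hsplit
      _ ≤ ENNReal.ofReal (nu m act B W) + ENNReal.ofReal ((εh : ℝ≥0) : ℝ) :=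
          ENNReal.ofReal_add_le
      _ = ENNReal.ofReal (nu m act B W) + (εh : ℝ≥0∞) := by
          rw [ENNReal.ofReal_coe_nnreal]
  have h4 : ENNReal.ofReal (nu m act B W) ≤ ∑' n, mfun m act B (f n) := by
    calc ENNReal.ofReal (nu m act B W)
        ≤ ∑' n, ENNReal.ofReal (nu m act B (f n)) :=
          ofReal_nu_le_tsum hB hm hmul hcont f hall (le_refl W)
      _ = ∑' n, mfun m act B (f n) := tsum_congr fun n => (mfun_sg (hall n)).symm
  have h5 : (∑' n, mfun m act B (f n)) ≤ μ A + εh := le_of_lt hsum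
  have hεsplit : (εh : ℝ≥0∞) + (εh : ℝ≥0∞) = (ε : ℝ≥0∞) := by
    rw [← ENNReal.coe_add]
    norm_cast
    rw [hεh]
    exact add_halves ε
  calc μ (A ∩ V) + μ (A \ V) ≤ ENNReal.ofReal (nu m act B W) + εh := h3
    _ ≤ (μ A + εh) + εh := add_le_add (h4.trans h5) le_rfl
    _ = μ A + ε := by rw [add_assoc, hεsplit]

lemma muOut_preimage_le
    (hinv : ∀ a : G, ∀ f ∈ lRUCSet G L, m (fun h => f (a * h)) = m f)
    (hone : ∀ x : X, act 1 x = x) (g : G) (A : Set X) :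
    MeasureTheory.OuterMeasure.ofFunction (mfun m act B) (mfun_empty hB hm hmul hcont)
      ((fun x => act g x) ⁻¹' A)
    ≤ MeasureTheory.OuterMeasure.ofFunction (mfun m act B)
        (mfun_empty hB hm hmul hcont) A := by
  set μ := MeasureTheory.OuterMeasure.ofFunction (mfun m act B) (mfun_empty hB hm hmul hcont)
    with hμ
  have hRHS : μ A = ⨅ (f : ℕ → Set X) (_ : A ⊆ ⋃ n, f n), ∑' n, mfun m act B (f n) := by
    rw [hμ]
    exact MeasureTheory.OuterMeasure.ofFunction_apply _ _ _
  rw [hRHS]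
  refine le_iInf fun f => le_iInf fun hf => ?_
  have hcover : (fun x => act g x) ⁻¹' A ⊆ ⋃ n, (fun x => act g x) ⁻¹' (f n) := by
    rw [← Set.preimage_iUnion]
    exact Set.preimage_mono hf
  have hstep : μ ((fun x => act g x) ⁻¹' A) ≤ ∑' n, mfun m act B ((fun x => act g x) ⁻¹' (f n)) := by
    have hL : μ ((fun x => act g x) ⁻¹' A) = ⨅ (f' : ℕ → Set X)
        (_ : (fun x => act g x) ⁻¹' A ⊆ ⋃ n, f' n), ∑' n, mfun m act B (f' n) := by
      rw [hμ]
      exact MeasureTheory.OuterMeasure.ofFunction_apply _ _ _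
    rw [hL]
    exact iInf₂_le (fun n => (fun x => act g x) ⁻¹' (f n)) hcover
  refine hstep.trans (ENNReal.tsum_le_tsum fun n => ?_)
  by_cases hn : SigmaGen B (f n)
  · rw [mfun_sg hn, mfun_sg (sg_preimage_act hcont g hn),
      nu_preimage hB hm hmul hcont hinv hone g (f n)]
  · simp only [mfun, if_neg hn]
    exact le_top

lemma muOut_preimage
    (hinv : ∀ a : G, ∀ f ∈ lRUCSet G L, m (fun h => f (a * h)) = m f)
    (hone : ∀ x : X, act 1 x = x) (g : G) (A : Set X) :
    MeasureTheory.OuterMeasure.ofFunction (mfun m act B) (mfun_empty hB hm hmul hcont)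
      ((fun x => act g x) ⁻¹' A)
    = MeasureTheory.OuterMeasure.ofFunction (mfun m act B)
        (mfun_empty hB hm hmul hcont) A := by
  refine le_antisymm (muOut_preimage_le hB hm hmul hcont hinv hone g A) ?_
  have h := muOut_preimage_le hB hm hmul hcont hinv hone g⁻¹ ((fun x => act g x) ⁻¹' A)
  have heq : (fun x => act g⁻¹ x) ⁻¹' ((fun x => act g x) ⁻¹' A) = A := by
    ext x
    simp only [Set.mem_preimage]
    rw [← hmul, mul_inv_cancel, hone]
  rwa [heq] at h

end MeasureConstr


open MeasureTheory

/-- If there is a left-invariant mean on `ℓ-RUC(G)`, then every σ-continuous action of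
`G` on a nonempty compact Hausdorff space `X` admits a `G`-invariant probability measure
on the σ-algebra generated by the σ-topology generated by a basis of `X`. -/
theorem invariant_measure_of_invariant_mean {G : Type*} [Group G] (L : Language)
    [L.Structure G]
    (m : (G → ℝ) → ℝ) (hm : IsMean L m)
    (hinv : ∀ a : G, ∀ f ∈ lRUCSet G L, m (fun h => f (a * h)) = m f)
    {X : Type*} [TopologicalSpace X] [CompactSpace X] [T2Space X] [Nonempty X]
    (B : Set (Set X)) (hB : TopologicalSpace.IsTopologicalBasis B)
    (act : G → X → X)
    (hone : ∀ x : X, act 1 x = x)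
    (hmul : ∀ (g h : G) (x : X), act (g * h) x = act g (act h x))
    (hcont : ∀ U : Set X, SigmaGen B U →
      ∃ (Φ : ℕ → Set G) (V : ℕ → Set X),
        (∀ i : ℕ, (Set.univ : Set G).Definable₁ L (Φ i)) ∧
        (∀ i : ℕ, SigmaGen B (V i)) ∧
        {p : G × X | act p.1 p.2 ∈ U} = ⋃ i : ℕ, Φ i ×ˢ V i) :
    ∃ μ : @MeasureTheory.Measure X (MeasurableSpace.generateFrom {s : Set X | SigmaGen B s}),
      μ Set.univ = 1 ∧
      ∀ g : G, ∀ A : Set X,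
        MeasurableSet[MeasurableSpace.generateFrom {s : Set X | SigmaGen B s}] A →
        μ ((fun x => act g x) ⁻¹' A) = μ A := by
  letI ms : MeasurableSpace X := MeasurableSpace.generateFrom {s : Set X | SigmaGen B s}
  set μ0 := MeasureTheory.OuterMeasure.ofFunction (mfun m act B)
    (mfun_empty hB hm hmul hcont) with hμ0
  have hle : ms ≤ μ0.caratheodory := by
    refine MeasurableSpace.generateFrom_le fun s hs => ?_
    rw [MeasureTheory.OuterMeasure.isCaratheodory_iff_le]
    exact fun A => muOut_caratheodory hB hm hmul hcont hs A
  refine ⟨μ0.toMeasure hle, ?_, ?_⟩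
  · rw [MeasureTheory.toMeasure_apply _ _ MeasurableSet.univ, hμ0,
      muOut_sg hB hm hmul hcont SigmaGen.univ, nu_univ hB hm hmul hcont,
      ENNReal.ofReal_one]
  · intro g A hA
    have hmeas : @Measurable X X ms ms (fun x => act g x) := by
      refine measurable_generateFrom fun t ht => ?_
      exact MeasurableSpace.measurableSet_generateFrom (sg_preimage_act hcont g ht)
    have hpre : MeasurableSet[ms] ((fun x => act g x) ⁻¹' A) := hmeas hA
    rw [MeasureTheory.toMeasure_apply _ _ hpre,
      MeasureTheory.toMeasure_apply _ _ hA, hμ0,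
      muOut_preimage hB hm hmul hcont hinv hone g A]
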